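/- Let ω > a > 0 and consider the planar diagonal system u_{k+1} = e^{−ω + ak(−1)^k − a(k−1)(−1)^{k−1}} u_k, v_{k+1} = e^{ω − ak(−1)^k + a(k−1)(−1)^{k−1}} v_k. Then this system does not admit an exponential dichotomy: there are no invariant projector P and constants K ≥ 1, 0 < α < 1 with ‖Φ(k,l)P_l‖ ≤ K α^{k−l} for k ≥ l and ‖Φ(k,l)(Id − P_l)‖ ≤ K (1/α)^{k−l} for k ≤ l. -/

import Mathlib

open Matrix

attribute [local instance] Matrix.linftyOpNormedAddCommGroup

abbrev Mat (N : ℕ) := Matrix (Fin N) (Fin N) ℝ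

noncomputable def fundSolNat {N : ℕ} (A : ℤ → GL (Fin N) ℝ) : ℕ → GL (Fin N) ℝ
  | 0 => 1
  | n + 1 => A (n : ℤ) * fundSolNat A n

noncomputable def fundSolNeg {N : ℕ} (A : ℤ → GL (Fin N) ℝ) : ℕ → GL (Fin N) ℝ
  | 0 => (A (-1))⁻¹
  | n + 1 => (A (Int.negSucc (n + 1)))⁻¹ * fundSolNeg A n

noncomputable def fundSol {N : ℕ} (A : ℤ → GL (Fin N) ℝ) : ℤ → GL (Fin N) ℝ
  | Int.ofNat n => fundSolNat A n
  | Int.negSucc n => fundSolNeg A n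

/-- The evolution operator `Φ(k,l)` of `x_{k+1} = A_k x_k`. -/
noncomputable def evol {N : ℕ} (A : ℤ → GL (Fin N) ℝ) (k l : ℤ) : Mat N :=
  ↑(fundSol A k * (fundSol A l)⁻¹)

def IsInvariantProjector {N : ℕ} (A : ℤ → GL (Fin N) ℝ) (P : ℤ → Mat N) : Prop :=
  (∀ k, P k * P k = P k) ∧ ∀ k, P (k + 1) * (A k : Mat N) = (A k : Mat N) * P k

/-- Evolution operator `Φ_γ(k,l) = γ^{-(k-l)} Φ(k,l)` of `x_{k+1} = (1/γ) A_k x_k`. -/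
noncomputable def evolW {N : ℕ} (A : ℤ → GL (Fin N) ℝ) (γ : ℝ) (k l : ℤ) : Mat N :=
  γ ^ (l - k) • evol A k l

def NEDWith {N : ℕ} (A : ℤ → GL (Fin N) ℝ) (γ : ℝ) (P : ℤ → Mat N) (K α ε : ℝ) : Prop :=
  IsInvariantProjector A P ∧ 1 ≤ K ∧ 0 < α ∧ α < 1 ∧ 1 ≤ ε ∧
    (∀ k l : ℤ, l ≤ k → ‖evolW A γ k l * P l‖ ≤ K * α ^ (k - l) * ε ^ l) ∧
    (∀ k l : ℤ, k ≤ l → ‖evolW A γ k l * (1 - P l)‖ ≤ K * (1 / α) ^ (k - l) * ε ^ l)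

def HasNED {N : ℕ} (A : ℤ → GL (Fin N) ℝ) (γ : ℝ) : Prop :=
  ∃ P K α ε, NEDWith A γ P K α ε

def HasStrongNED {N : ℕ} (A : ℤ → GL (Fin N) ℝ) (γ : ℝ) : Prop :=
  ∃ P K α ε, NEDWith A γ P K α ε ∧ α * ε ^ 2 < 1

def HasED {N : ℕ} (A : ℤ → GL (Fin N) ℝ) (γ : ℝ) : Prop :=
  ∃ P K α, NEDWith A γ P K α 1

def SigmaNED {N : ℕ} (A : ℤ → GL (Fin N) ℝ) : Set ℝ := {γ | 0 < γ ∧ ¬ HasStrongNED A γ}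

def rhoNED {N : ℕ} (A : ℤ → GL (Fin N) ℝ) : Set ℝ := {γ | 0 < γ ∧ HasStrongNED A γ}

def SigmaED {N : ℕ} (A : ℤ → GL (Fin N) ℝ) : Set ℝ := {γ | 0 < γ ∧ ¬ HasED A γ}

def stableSet {N : ℕ} (A : ℤ → GL (Fin N) ℝ) (γ ε : ℝ) (l : ℤ) : Set (Fin N → ℝ) :=
  {ξ | ∃ C : ℝ, ∀ k : ℤ, l ≤ k → ‖(evol A k l).mulVec ξ‖ * γ ^ (-k) * ε ^ (-l) ≤ C}

def unstableSet {N : ℕ} (A : ℤ → GL (Fin N) ℝ) (γ ε : ℝ) (l : ℤ) : Set (Fin N → ℝ) :=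
  {ξ | ∃ C : ℝ, ∀ k : ℤ, k ≤ l → ‖(evol A k l).mulVec ξ‖ * γ ^ (-k) * ε ^ (-l) ≤ C}

noncomputable def exExp (ω a : ℝ) (k : ℤ) : ℝ :=
  -ω + a * k * (-1 : ℝ) ^ k - a * (k - 1) * (-1 : ℝ) ^ (k - 1)

noncomputable def exSys (ω a : ℝ) (k : ℤ) : GL (Fin 2) ℝ :=
  Matrix.GeneralLinearGroup.mkOfDetNeZero
    (Matrix.diagonal ![Real.exp (exExp ω a k), Real.exp (-exExp ω a k)])
    (by
      rw [Matrix.det_diagonal]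
      rw [Fin.prod_univ_two]
      simp only [Matrix.cons_val_zero, Matrix.cons_val_one, Matrix.head_cons]
      exact (mul_pos (Real.exp_pos _) (Real.exp_pos _)).ne')

namespace NoEDAux

/-- entry lower bound for the `L∞` operator norm -/
lemma abs_entry_le_norm (M : Mat 2) (i j : Fin 2) : |M i j| ≤ ‖M‖ := by
  rw [← Real.norm_eq_abs, ← coe_nnnorm, ← coe_nnnorm, NNReal.coe_le_coe,
    Matrix.linfty_opNNNorm_def]
  refine le_trans (Finset.single_le_sum (f := fun j => ‖M i j‖₊) (fun _ _ => zero_le)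
    (Finset.mem_univ j)) ?_
  exact Finset.le_sup (f := fun i => ∑ j : Fin 2, ‖M i j‖₊) (Finset.mem_univ i)

lemma diag_mul_diag (a b c d : ℝ) :
    Matrix.diagonal ![a, b] * Matrix.diagonal ![c, d] = Matrix.diagonal ![a * c, b * d] := by
  rw [Matrix.diagonal_mul_diagonal]
  refine congrArg Matrix.diagonal ?_
  funext i; fin_cases i <;> simp

lemma diag_one : Matrix.diagonal ![(1:ℝ), 1] = (1 : Mat 2) := by
  have : (![(1:ℝ), 1]) = fun _ => (1:ℝ) := by funext i; fin_cases i <;> rfl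
  rw [this, Matrix.diagonal_one]

/-- the accumulated exponent `E k` with `E 0 = 0` and `E (k+1) - E k = exExp ω a k`. -/
noncomputable def EE (ω a : ℝ) (k : ℤ) : ℝ := -k * ω - a * (k - 1) * (-1 : ℝ) ^ k - a

lemma EE_zero (ω a : ℝ) : EE ω a 0 = 0 := by simp [EE]

lemma exExp_eq (ω a : ℝ) (k : ℤ) : exExp ω a k = EE ω a (k + 1) - EE ω a k := by
  have h1 : (-1:ℝ) ^ (k + 1) = -(-1:ℝ) ^ k := by
    rw [zpow_add_one₀ (by norm_num : (-1:ℝ) ≠ 0)]; ring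
  have h2 : (-1:ℝ) ^ (k - 1) = -(-1:ℝ) ^ k := by
    rw [zpow_sub_one₀ (by norm_num : (-1:ℝ) ≠ 0)]; norm_num
  simp only [exExp, EE, h1, h2]
  push_cast
  ring

lemma coe_exSys (ω a : ℝ) (k : ℤ) : ((exSys ω a k : GL (Fin 2) ℝ) : Mat 2) =
    Matrix.diagonal ![Real.exp (exExp ω a k), Real.exp (-exExp ω a k)] := rfl

lemma coe_exSys_inv (ω a : ℝ) (k : ℤ) : (((exSys ω a k)⁻¹ : GL (Fin 2) ℝ) : Mat 2) =
    Matrix.diagonal ![Real.exp (-exExp ω a k), Real.exp (exExp ω a k)] := by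
  refine Units.inv_eq_of_mul_eq_one_right ?_
  rw [coe_exSys, diag_mul_diag, ← Real.exp_add, ← Real.exp_add]
  simp [diag_one]

lemma coe_fundSol (ω a : ℝ) (k : ℤ) : ((fundSol (exSys ω a) k : GL (Fin 2) ℝ) : Mat 2) =
    Matrix.diagonal ![Real.exp (EE ω a k), Real.exp (-EE ω a k)] := by
  cases k with
  | ofNat n =>
    induction n with
    | zero =>
      show ((fundSolNat (exSys ω a) 0 : GL (Fin 2) ℝ) : Mat 2) = _
      rw [show (Int.ofNat 0) = (0:ℤ) from rfl, EE_zero]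
      simp [fundSolNat, diag_one]
    | succ n ih =>
      show ((fundSolNat (exSys ω a) (n+1) : GL (Fin 2) ℝ) : Mat 2) = _
      have ih' : ((fundSolNat (exSys ω a) n : GL (Fin 2) ℝ) : Mat 2) =
          Matrix.diagonal ![Real.exp (EE ω a n), Real.exp (-EE ω a n)] := ih
      rw [fundSolNat, Units.val_mul, ih', coe_exSys, diag_mul_diag, ← Real.exp_add,
        ← Real.exp_add, exExp_eq]
      have : ((Int.ofNat (n+1)) : ℤ) = (n : ℤ) + 1 := by simp [Int.ofNat_eq_natCast]
      rw [this]
      ring_nf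
  | negSucc n =>
    induction n with
    | zero =>
      show ((fundSolNeg (exSys ω a) 0 : GL (Fin 2) ℝ) : Mat 2) = _
      rw [fundSolNeg, coe_exSys_inv]
      have h := exExp_eq ω a (-1)
      rw [show (-1:ℤ) + 1 = 0 from rfl, EE_zero] at h
      rw [show (Int.negSucc 0) = (-1:ℤ) from rfl, show EE ω a (-1) = -exExp ω a (-1) by
        rw [h]; ring]
      ring_nf
    | succ n ih =>
      show ((fundSolNeg (exSys ω a) (n+1) : GL (Fin 2) ℝ) : Mat 2) = _
      have ih' : ((fundSolNeg (exSys ω a) n : GL (Fin 2) ℝ) : Mat 2) =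
          Matrix.diagonal ![Real.exp (EE ω a (Int.negSucc n)), Real.exp (-EE ω a (Int.negSucc n))] := ih
      rw [fundSolNeg, Units.val_mul, ih', coe_exSys_inv, diag_mul_diag, ← Real.exp_add,
        ← Real.exp_add]
      have h := exExp_eq ω a (Int.negSucc (n+1))
      have h2 : (Int.negSucc (n+1)) + 1 = Int.negSucc n := by simp [Int.negSucc_eq]
      rw [h2] at h
      rw [show -exExp ω a (Int.negSucc (n+1)) + EE ω a (Int.negSucc n) = EE ω a (Int.negSucc (n+1)) by rw [h]; ring,
        show exExp ω a (Int.negSucc (n+1)) + -EE ω a (Int.negSucc n) = -EE ω a (Int.negSucc (n+1)) by rw [h]; ring]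

lemma evol_eq (ω a : ℝ) (k l : ℤ) : evol (exSys ω a) k l =
    Matrix.diagonal ![Real.exp (EE ω a k - EE ω a l), Real.exp (EE ω a l - EE ω a k)] := by
  have hinv : (((fundSol (exSys ω a) l)⁻¹ : GL (Fin 2) ℝ) : Mat 2) =
      Matrix.diagonal ![Real.exp (-EE ω a l), Real.exp (EE ω a l)] := by
    refine Units.inv_eq_of_mul_eq_one_right ?_
    rw [coe_fundSol, diag_mul_diag, ← Real.exp_add, ← Real.exp_add]
    simp [diag_one]
  rw [evol, Units.val_mul, coe_fundSol, hinv, diag_mul_diag, ← Real.exp_add, ← Real.exp_add]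
  ring_nf

end NoEDAux

namespace NoEDAux

lemma EE_even {k : ℤ} (ω a : ℝ) (h : Even k) : EE ω a k = -k * (ω + a) := by
  simp only [EE, h.neg_one_zpow]; ring

lemma EE_odd {k : ℤ} (ω a : ℝ) (h : Odd k) : EE ω a k = -k * (ω - a) - 2 * a := by
  simp only [EE, h.neg_one_zpow]; ring

lemma EE_le {ω a : ℝ} (ha : 0 < a) (k : ℤ) (hk : 0 ≤ k) : EE ω a k ≤ -k * (ω - a) := by
  have hk' : (0:ℝ) ≤ (k:ℝ) := by exact_mod_cast hk
  rcases Int.even_or_odd k with h | h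
  · rw [EE_even ω a h]; nlinarith
  · rw [EE_odd ω a h]; nlinarith

lemma EE_ge {ω a : ℝ} (ha : 0 < a) (k L : ℤ) (hk : k ≤ L) (hL : 0 ≤ L) :
    -k * (ω - a) - 2 * a * L - 2 * a ≤ EE ω a k := by
  have hk' : (k:ℝ) ≤ (L:ℝ) := by exact_mod_cast hk
  have hL' : (0:ℝ) ≤ (L:ℝ) := by exact_mod_cast hL
  rcases Int.even_or_odd k with h | h
  · rw [EE_even ω a h]; nlinarith
  · rw [EE_odd ω a h]; nlinarith

lemma eq_zero_of_le_geom {x c β : ℝ} (hβ0 : 0 < β) (hβ1 : β < 1) (hx : 0 ≤ x)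
    (h : ∀ n : ℕ, x ≤ c * β ^ n) : x = 0 := by
  by_contra hne
  have hx0 : 0 < x := lt_of_le_of_ne hx (Ne.symm hne)
  have hc : 0 < c := by have := h 0; simp at this; linarith
  obtain ⟨n, hn⟩ := exists_pow_lt_of_lt_one (div_pos hx0 hc) hβ1
  have hlt : x < x :=
    calc x ≤ c * β ^ n := h n
    _ < c * (x / c) := mul_lt_mul_of_pos_left hn hc
    _ = x := by field_simp
  exact lt_irrefl _ hlt

end NoEDAux


/-- For `ω > a > 0`, the planar diagonal system
`u_{k+1} = e^{−ω + ak(−1)^k − a(k−1)(−1)^{k−1}} u_k`,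
`v_{k+1} = e^{ω − ak(−1)^k + a(k−1)(−1)^{k−1}} v_k` does not admit an exponential
dichotomy: there are no invariant projector `P` and constants `K ≥ 1`, `0 < α < 1`
with `‖Φ(k,l)P_l‖ ≤ K α^{k−l}` for `k ≥ l` and `‖Φ(k,l)(Id − P_l)‖ ≤ K (1/α)^{k−l}`
for `k ≤ l`. -/
theorem example_no_exponential_dichotomy (ω a : ℝ) (ha : 0 < a) (haω : a < ω) :
    ¬ HasED (exSys ω a) 1 := by
  rintro ⟨P, K, α, hproj, hK, hα0, hα1, -, hS, hU⟩
  set E := NoEDAux.EE ω a with hE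
  have hS' : ∀ k l : ℤ, l ≤ k → ‖evol (exSys ω a) k l * P l‖ ≤ K * α ^ (k - l) := by
    intro k l hkl
    simpa [evolW, _root_.one_zpow, one_smul] using hS k l hkl
  have hU' : ∀ k l : ℤ, k ≤ l →
      ‖evol (exSys ω a) k l * (1 - P l)‖ ≤ K * (1 / α) ^ (k - l) := by
    intro k l hkl
    simpa [evolW, _root_.one_zpow, one_smul] using hU k l hkl
  have entry0 : ∀ (k l : ℤ) (M : Mat 2) (j : Fin 2),
      Real.exp (E k - E l) * |M 0 j| ≤ ‖evol (exSys ω a) k l * M‖ := by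
    intro k l M j
    have h1 : (evol (exSys ω a) k l * M) 0 j = Real.exp (E k - E l) * M 0 j := by
      rw [NoEDAux.evol_eq, Matrix.diagonal_mul]; simp [hE]
    calc Real.exp (E k - E l) * |M 0 j| = |(evol (exSys ω a) k l * M) 0 j| := by
          rw [h1, abs_mul, abs_of_pos (Real.exp_pos _)]
    _ ≤ _ := NoEDAux.abs_entry_le_norm _ 0 j
  have entry1 : ∀ (k l : ℤ) (M : Mat 2) (j : Fin 2),
      Real.exp (E l - E k) * |M 1 j| ≤ ‖evol (exSys ω a) k l * M‖ := by
    intro k l M j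
    have h1 : (evol (exSys ω a) k l * M) 1 j = Real.exp (E l - E k) * M 1 j := by
      rw [NoEDAux.evol_eq, Matrix.diagonal_mul]; simp [hE]
    calc Real.exp (E l - E k) * |M 1 j| = |(evol (exSys ω a) k l * M) 1 j| := by
          rw [h1, abs_mul, abs_of_pos (Real.exp_pos _)]
    _ ≤ _ := NoEDAux.abs_entry_le_norm _ 1 j
  -- choose L
  obtain ⟨m, hm⟩ := exists_nat_gt ((Real.log K + ω + a) / (4 * a))
  set L : ℤ := 2 * (m : ℤ) with hLdef
  have hLeven : Even L := ⟨(m : ℤ), by rw [hLdef]; ring⟩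
  have hL0 : (0:ℤ) ≤ L := by positivity
  have hLbig : Real.log K < 2 * a * (L : ℝ) - ω - a := by
    have h4a : (0:ℝ) < 4 * a := by linarith
    have h1 := (div_lt_iff₀ h4a).mp hm
    have hcast : ((L : ℤ) : ℝ) = 2 * (m : ℝ) := by rw [hLdef]; push_cast; ring
    nlinarith
  set β : ℝ := α * Real.exp (-(ω - a)) with hβdef
  have hβ0 : 0 < β := mul_pos hα0 (Real.exp_pos _)
  have hexplt : Real.exp (-(ω - a)) < 1 := by
    rw [Real.exp_lt_one_iff]; linarith
  have hβ1 : β < 1 := by nlinarith [Real.exp_pos (-(ω - a))]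
  have hKpos : (0:ℝ) < K := by linarith
  -- row 1 of P L vanishes
  have hrow1 : ∀ j : Fin 2, P L 1 j = 0 := by
    intro j
    refine abs_eq_zero.mp (NoEDAux.eq_zero_of_le_geom (c := K * Real.exp (-(L:ℝ) * (ω - a) - E L))
      hβ0 hβ1 (abs_nonneg _) ?_)
    intro n
    have hb := (entry1 (L + n) L (P L) j).trans (hS' (L + n) L (by omega))
    have hzp : α ^ ((L + (n:ℤ)) - L) = α ^ n := by
      rw [show (L + (n:ℤ)) - L = (n:ℤ) by ring, zpow_natCast]
    rw [hzp] at hb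
    have hEle : E (L + n) ≤ -((L:ℝ) + (n:ℝ)) * (ω - a) := by
      have := NoEDAux.EE_le (ω := ω) ha (L + n) (by omega)
      rw [← hE] at this
      convert this using 2
      push_cast; ring
    have hαn : (0:ℝ) ≤ K * α ^ n := mul_nonneg (le_of_lt hKpos) (le_of_lt (pow_pos hα0 n))
    calc |P L 1 j| = Real.exp (E (L + n) - E L) * (Real.exp (E L - E (L + n)) * |P L 1 j|) := by
          rw [← mul_assoc, ← Real.exp_add,
            show E (L + n) - E L + (E L - E (L + n)) = 0 by ring, Real.exp_zero, one_mul]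
    _ ≤ Real.exp (E (L + n) - E L) * (K * α ^ n) :=
          mul_le_mul_of_nonneg_left hb (le_of_lt (Real.exp_pos _))
    _ ≤ Real.exp (-((L:ℝ) + (n:ℝ)) * (ω - a) - E L) * (K * α ^ n) := by
          apply mul_le_mul_of_nonneg_right _ hαn
          exact Real.exp_le_exp.mpr (by linarith)
    _ = K * Real.exp (-(L:ℝ) * (ω - a) - E L) * β ^ n := by
          have hsplit : Real.exp (-((L:ℝ) + (n:ℝ)) * (ω - a) - E L)
              = Real.exp (-(L:ℝ) * (ω - a) - E L) * (Real.exp (-(ω - a))) ^ n := by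
            rw [← Real.exp_nat_mul, ← Real.exp_add]; congr 1; ring
          rw [hsplit, hβdef, mul_pow]; ring
  -- row 0 of 1 - P L vanishes
  have hrow0 : ∀ j : Fin 2, (1 - P L) 0 j = 0 := by
    intro j
    refine abs_eq_zero.mp (NoEDAux.eq_zero_of_le_geom
      (c := K * Real.exp (E L + (L:ℝ) * (ω - a) + 2 * a * (L:ℝ) + 2 * a))
      hβ0 hβ1 (abs_nonneg _) ?_)
    intro n
    have hb := (entry0 (L - n) L (1 - P L) j).trans (hU' (L - n) L (by omega))
    have hzp : (1 / α) ^ ((L - (n:ℤ)) - L) = α ^ n := by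
      rw [show (L - (n:ℤ)) - L = -(n:ℤ) by ring, _root_.zpow_neg, one_div, _root_.inv_zpow, inv_inv, zpow_natCast]
    rw [hzp] at hb
    have hEge : -((L:ℝ) - (n:ℝ)) * (ω - a) - 2 * a * (L:ℝ) - 2 * a ≤ E (L - n) := by
      have := NoEDAux.EE_ge (ω := ω) ha (L - n) L (by omega) hL0
      rw [← hE] at this
      convert this using 2
      push_cast; ring
    have hαn : (0:ℝ) ≤ K * α ^ n := mul_nonneg (le_of_lt hKpos) (le_of_lt (pow_pos hα0 n))
    calc |(1 - P L) 0 j|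
        = Real.exp (E L - E (L - n)) * (Real.exp (E (L - n) - E L) * |(1 - P L) 0 j|) := by
          rw [← mul_assoc, ← Real.exp_add,
            show E L - E (L - n) + (E (L - n) - E L) = 0 by ring, Real.exp_zero, one_mul]
    _ ≤ Real.exp (E L - E (L - n)) * (K * α ^ n) :=
          mul_le_mul_of_nonneg_left hb (le_of_lt (Real.exp_pos _))
    _ ≤ Real.exp (E L + ((L:ℝ) - (n:ℝ)) * (ω - a) + 2 * a * (L:ℝ) + 2 * a) * (K * α ^ n) := by
          apply mul_le_mul_of_nonneg_right _ hαn
          exact Real.exp_le_exp.mpr (by linarith)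
    _ = K * Real.exp (E L + (L:ℝ) * (ω - a) + 2 * a * (L:ℝ) + 2 * a) * β ^ n := by
          have hsplit : Real.exp (E L + ((L:ℝ) - (n:ℝ)) * (ω - a) + 2 * a * (L:ℝ) + 2 * a)
              = Real.exp (E L + (L:ℝ) * (ω - a) + 2 * a * (L:ℝ) + 2 * a)
                * (Real.exp (-(ω - a))) ^ n := by
            rw [← Real.exp_nat_mul, ← Real.exp_add]; congr 1; ring
          rw [hsplit, hβdef, mul_pow]; ring
  have hP00 : P L 0 0 = 1 := by
    have := hrow0 0
    rw [Matrix.sub_apply, Matrix.one_apply_eq] at this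
    linarith
  -- final contradiction at k = L + 1
  have hb := (entry0 (L + 1) L (P L) 0).trans (hS' (L + 1) L (by omega))
  rw [hP00] at hb
  have hzp : α ^ ((L + 1) - L) = α := by
    rw [show (L + 1) - L = (1:ℤ) by ring, zpow_one]
  rw [hzp, abs_one, mul_one] at hb
  have hEdiff : E (L + 1) - E L = 2 * a * (L:ℝ) - ω - a := by
    rw [hE, NoEDAux.EE_odd ω a (Even.add_one hLeven), NoEDAux.EE_even ω a hLeven]
    push_cast; ring
  rw [hEdiff] at hb
  have h1 : K < Real.exp (2 * a * (L:ℝ) - ω - a) := by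
    rw [← Real.exp_log hKpos]
    exact Real.exp_lt_exp.mpr hLbig
  nlinarith
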